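/- Let W be a matrix weight of size N such that W(x₀) = I for some x₀ in the support of W. Then W reduces to scalar weights (is equivalent to a diagonal matrix weight) if and only if W is unitarily equivalent to a diagonal matrix weight. -/

import Mathlib

open MeasureTheory Matrix
open scoped ComplexOrder


lemma myPosDefConj {n : Type} [Fintype n] [DecidableEq n] {A B Binv : Matrix n n ℂ}
    (hA : A.PosDef) (h1 : B * Binv = 1) (h2 : Binv * B = 1) : (B * A * Bᴴ).PosDef := by
  rw [Matrix.posDef_iff_dotProduct_mulVec]
  constructor
  · have := hA.isHermitian
    simp [Matrix.IsHermitian, conjTranspose_mul, mul_assoc, this.eq]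
  · intro x hx
    have hx' : Bᴴ *ᵥ x ≠ 0 := by
      intro h
      apply hx
      have : Binvᴴ *ᵥ (Bᴴ *ᵥ x) = x := by
        rw [mulVec_mulVec, ← conjTranspose_mul, h1, conjTranspose_one, one_mulVec]
      rw [← this, h, mulVec_zero]
    have h := hA.dotProduct_mulVec_pos hx'
    rw [show (B * A * Bᴴ) *ᵥ x = B *ᵥ (A *ᵥ (Bᴴ *ᵥ x)) by simp [mulVec_mulVec, mul_assoc]]
    rw [star_mulVec, ← dotProduct_mulVec, conjTranspose_conjTranspose] at h; exact h

lemma myDiagPos {n : Type} [Fintype n] [DecidableEq n] {A : Matrix n n ℂ}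
    (hA : A.PosDef) (i : n) : 0 < A i i := by
  have := hA.dotProduct_mulVec_pos (x := Pi.single i 1) (by simp [Function.ne_iff])
  simpa [mulVec_single, dotProduct, Pi.single_apply] using this





noncomputable section

/-- The set of real points strictly between the extended-real endpoints `a` and `b`. -/
def weightSupport (a b : EReal) : Set ℝ := {x : ℝ | a < (x : EReal) ∧ (x : EReal) < b}

variable {I : Type} [Fintype I] [DecidableEq I]
variable {I' : Type} [Fintype I'] [DecidableEq I']

/-- Entrywise integral of a matrix-valued function over a set. -/
def matIntegral (S : Set ℝ) (F : ℝ → Matrix I I ℂ) : Matrix I I ℂ :=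
  Matrix.of fun i j => ∫ x in S, F x i j

/-- `W` is a matrix weight on the (nondegenerate) interval `(a,b)`. -/
def IsMatrixWeight (a b : EReal) (W : ℝ → Matrix I I ℂ) : Prop :=
  a < b ∧
  (∀ x ∈ weightSupport a b, (W x).PosSemidef) ∧
  (∀ᵐ x : ℝ ∂(volume.restrict (weightSupport a b)), (W x).PosDef) ∧
  (∀ n : ℕ, ∀ i j, IntegrableOn (fun x : ℝ => (x : ℂ) ^ n * W x i j) (weightSupport a b))

/-- Equivalence of matrix weights: `W' = M W M*` for a nonsingular `M`. -/
def WeightEquiv (a b : EReal) (W : ℝ → Matrix I I ℂ) (W' : ℝ → Matrix I' I' ℂ) : Prop :=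
  ∃ (M : Matrix I' I ℂ) (M' : Matrix I I' ℂ), M * M' = 1 ∧ M' * M = 1 ∧
    ∀ x ∈ weightSupport a b, W' x = M * W x * Mᴴ

/-- Unitary equivalence of matrix weights. -/
def UnitaryWeightEquiv (a b : EReal) (W : ℝ → Matrix I I ℂ) (W' : ℝ → Matrix I' I' ℂ) : Prop :=
  ∃ M : Matrix I' I ℂ, M * Mᴴ = 1 ∧ Mᴴ * M = 1 ∧
    ∀ x ∈ weightSupport a b, W' x = M * W x * Mᴴ

/-- `W` reduces: it is equivalent to a direct sum of two matrix weights of smaller size. -/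
def Reduces (a b : EReal) (W : ℝ → Matrix I I ℂ) : Prop :=
  ∃ (N₁ N₂ : ℕ) (W₁ : ℝ → Matrix (Fin N₁) (Fin N₁) ℂ) (W₂ : ℝ → Matrix (Fin N₂) (Fin N₂) ℂ),
    0 < N₁ ∧ 0 < N₂ ∧ N₁ + N₂ = Fintype.card I ∧
    IsMatrixWeight a b W₁ ∧ IsMatrixWeight a b W₂ ∧
    WeightEquiv a b W (fun x => Matrix.fromBlocks (W₁ x) 0 0 (W₂ x))

/-- The real vector space `C_ℝ` of a matrix weight. -/
def CR (a b : EReal) (W : ℝ → Matrix I I ℂ) : Set (Matrix I I ℂ) :=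
  {T | ∀ᵐ x ∂(volume.restrict (weightSupport a b)), T * W x = W x * Tᴴ}

/-- Evaluation of a matrix polynomial at a real point. -/
def polyEval (p : Polynomial (Matrix I I ℂ)) (x : ℝ) : Matrix I I ℂ :=
  p.eval ((x : ℂ) • (1 : Matrix I I ℂ))

/-- A sequence of orthogonal polynomials with respect to `W`:  `Q n` has degree `n` with
nonsingular leading coefficient, and distinct members are orthogonal. -/
def IsOPS (a b : EReal) (W : ℝ → Matrix I I ℂ) (Q : ℕ → Polynomial (Matrix I I ℂ)) : Prop :=
  (∀ n, (Q n).natDegree = n ∧ IsUnit ((Q n).coeff n)) ∧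
  ∀ n m, n ≠ m →
    matIntegral (weightSupport a b) (fun x => polyEval (Q n) x * W x * (polyEval (Q m) x)ᴴ) = 0

/-- The sequence of monic orthogonal polynomials with respect to `W`. -/
def IsMonicOPS (a b : EReal) (W : ℝ → Matrix I I ℂ) (P : ℕ → Polynomial (Matrix I I ℂ)) : Prop :=
  (∀ n, (P n).Monic ∧ (P n).natDegree = n) ∧
  ∀ n m, n ≠ m →
    matIntegral (weightSupport a b) (fun x => polyEval (P n) x * W x * (polyEval (P m) x)ᴴ) = 0

end

/-- If `W` is a matrix weight with `W(x₀) = I` for some `x₀` in its support,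
then `W` is equivalent to a diagonal matrix weight if and only if `W` is unitarily
equivalent to a diagonal matrix weight. -/
theorem stmt_2 {N : ℕ} (a b : EReal) (W : ℝ → Matrix (Fin N) (Fin N) ℂ)
    (hW : IsMatrixWeight a b W)
    (x₀ : ℝ) (hx₀ : x₀ ∈ weightSupport a b) (hWx₀ : W x₀ = 1) :
    (∃ (M : Matrix (Fin N) (Fin N) ℂ) (Λ : ℝ → Matrix (Fin N) (Fin N) ℂ),
        IsUnit M ∧ IsMatrixWeight a b Λ ∧ (∀ x ∈ weightSupport a b, (Λ x).IsDiag) ∧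
        ∀ x ∈ weightSupport a b, W x = M * Λ x * Mᴴ) ↔
      (∃ (U : Matrix (Fin N) (Fin N) ℂ) (Λ : ℝ → Matrix (Fin N) (Fin N) ℂ),
        U * Uᴴ = 1 ∧ Uᴴ * U = 1 ∧ IsMatrixWeight a b Λ ∧
        (∀ x ∈ weightSupport a b, (Λ x).IsDiag) ∧
        ∀ x ∈ weightSupport a b, W x = U * Λ x * Uᴴ) := by
  constructor
  · rintro ⟨M, Λ, hM, hΛ, hdiag, hrep⟩
    set Minv : Matrix (Fin N) (Fin N) ℂ := ↑hM.unit⁻¹ with hMinv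
    have hMM : M * Minv = 1 := by
      simpa [hMinv] using hM.unit.mul_inv
    have hMM' : Minv * M = 1 := by
      simpa [hMinv] using hM.unit.inv_mul
    have h1 : M * Λ x₀ * Mᴴ = 1 := by rw [← hrep x₀ hx₀, hWx₀]
    -- Λ x₀ is positive definite
    have hΛx₀ : Λ x₀ = Minv * Minvᴴ := by
      calc Λ x₀ = (Minv * M) * Λ x₀ * (Mᴴ * Minvᴴ) := by
            rw [← conjTranspose_mul, hMM', conjTranspose_one, one_mul, mul_one]
        _ = Minv * (M * Λ x₀ * Mᴴ) * Minvᴴ := by simp only [mul_assoc]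
        _ = Minv * Minvᴴ := by rw [h1, mul_one]
    have hΛx₀pd : (Λ x₀).PosDef := by
      rw [hΛx₀, show Minv * Minvᴴ = Minv * 1 * Minvᴴ by rw [mul_one]]
      exact myPosDefConj Matrix.PosDef.one hMM' hMM
    have hpos : ∀ i, 0 < Λ x₀ i i := myDiagPos hΛx₀pd
    have hre : ∀ i, 0 < (Λ x₀ i i).re := fun i => (Complex.lt_def.mp (hpos i)).1
    have him : ∀ i, (Λ x₀ i i).im = 0 := fun i => ((Complex.lt_def.mp (hpos i)).2).symm
    set d : Fin N → ℝ := fun i => Real.sqrt ((Λ x₀ i i).re) with hdd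
    have hdpos : ∀ i, 0 < d i := fun i => Real.sqrt_pos.mpr (hre i)
    have hdsq : ∀ i, (d i : ℂ) * (d i : ℂ) = Λ x₀ i i := by
      intro i
      rw [← Complex.ofReal_mul,
        show d i * d i = (Λ x₀ i i).re from Real.mul_self_sqrt (hre i).le]
      exact Complex.ext rfl (by simp [him i])
    set D : Matrix (Fin N) (Fin N) ℂ := diagonal (fun i => (d i : ℂ)) with hD
    set E : Matrix (Fin N) (Fin N) ℂ := diagonal (fun i => ((d i : ℂ))⁻¹) with hE
    have hdne : ∀ i, (d i : ℂ) ≠ 0 := fun i => by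
      exact_mod_cast Complex.ofReal_ne_zero.mpr (hdpos i).ne'
    have hDE : D * E = 1 := by
      rw [hD, hE, diagonal_mul_diagonal]
      rw [show (fun i => (d i : ℂ) * ((d i : ℂ))⁻¹) = fun _ => (1 : ℂ) by
        funext i; exact mul_inv_cancel₀ (hdne i)]
      exact diagonal_one
    have hED : E * D = 1 := mul_eq_one_comm.mp hDE
    have hDH : Dᴴ = D := by
      rw [hD, diagonal_conjTranspose]
      exact congrArg diagonal (funext fun i => by simp [Complex.conj_ofReal])
    have hEH : Eᴴ = E := by
      rw [hE, diagonal_conjTranspose]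
      exact congrArg diagonal
        (funext fun i => by simp [← Complex.ofReal_inv, Complex.conj_ofReal])
    have hDD : D * D = Λ x₀ := by
      rw [hD, diagonal_mul_diagonal]
      rw [show (fun i => (d i : ℂ) * (d i : ℂ)) = (Λ x₀).diag by funext i; exact hdsq i]
      exact (hdiag x₀ hx₀).diagonal_diag
    have hcancelDE : ∀ X : Matrix (Fin N) (Fin N) ℂ, D * (E * X) = X := fun X => by
      rw [← mul_assoc, hDE, one_mul]
    have hcancelED : ∀ X : Matrix (Fin N) (Fin N) ℂ, E * (D * X) = X := fun X => by
      rw [← mul_assoc, hED, one_mul]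
    refine ⟨M * D, fun x => E * Λ x * E, ?_, ?_, ?_, ?_, ?_⟩
    · -- U * Uᴴ = 1
      rw [conjTranspose_mul, hDH]
      calc M * D * (D * Mᴴ) = M * (Λ x₀ * Mᴴ) := by
            rw [mul_assoc, ← mul_assoc D D, hDD]
        _ = 1 := by rw [← mul_assoc, h1]
    · -- Uᴴ * U = 1
      rw [mul_eq_one_comm, conjTranspose_mul, hDH]
      calc M * D * (D * Mᴴ) = M * (Λ x₀ * Mᴴ) := by
            rw [mul_assoc, ← mul_assoc D D, hDD]
        _ = 1 := by rw [← mul_assoc, h1]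
    · -- IsMatrixWeight for the scaled Λ
      obtain ⟨hab, hpsd, hpd, hint⟩ := hΛ
      refine ⟨hab, ?_, ?_, ?_⟩
      · intro x hx
        have := (hpsd x hx).mul_mul_conjTranspose_same E
        rwa [hEH] at this
      · filter_upwards [hpd] with x hx
        have := myPosDefConj hx hED hDE
        rwa [hEH] at this
      · intro n i j
        have h := (hint n i j).const_mul (((d i : ℂ))⁻¹ * ((d j : ℂ))⁻¹)
        refine h.congr (Filter.Eventually.of_forall fun x => ?_)
        simp only [hE, diagonal_mul, mul_diagonal]
        ring
    · -- diagonal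
      intro x hx i j hij
      simp only [hE, diagonal_mul, mul_diagonal]
      rw [hdiag x hx hij]
      ring
    · -- representation
      intro x hx
      rw [conjTranspose_mul, hDH, hrep x hx]
      simp only [mul_assoc]
      rw [hcancelDE, hcancelED]
  · rintro ⟨U, Λ, h1, h2, hw, hd, hr⟩
    exact ⟨U, Λ, ⟨⟨U, Uᴴ, h1, h2⟩, rfl⟩, hw, hd, hr⟩
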